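/- Let n, r, s be natural numbers with n = r + s, let P1 be a real n×r matrix, P2 a real n×s matrix, N1 a real r×n matrix and N2 a real s×n matrix. Set N := the stacked n×n matrix with top block N1 and bottom block N2, and B := N·[P1 | P2], and assume B is invertible. Then for every real ε ≠ 0 the matrix A2(ε) := N·[P1 | ε·P2] is invertible, and I_n − [P1 | ε·P2]·A2(ε)⁻¹·N = I_n − [P1 | P2]·B⁻¹·N; in particular the left-hand side is independent of ε ≠ 0 and extends smoothly to ε = 0. -/

import Mathlib

open Matrix

theorem stmt_11 (n r s : ℕ) (hn : n = r + s)
    (P1 : Matrix (Fin n) (Fin r) ℝ) (P2 : Matrix (Fin n) (Fin s) ℝ)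
    (N1 : Matrix (Fin r) (Fin n) ℝ) (N2 : Matrix (Fin s) (Fin n) ℝ)
    (hB : IsUnit (Matrix.fromRows N1 N2 * Matrix.fromCols P1 P2)) :
    ∀ ε : ℝ, ε ≠ 0 →
      IsUnit (Matrix.fromRows N1 N2 * Matrix.fromCols P1 (ε • P2)) ∧
      (1 : Matrix (Fin n) (Fin n) ℝ) -
          Matrix.fromCols P1 (ε • P2) *
            (Matrix.fromRows N1 N2 * Matrix.fromCols P1 (ε • P2))⁻¹ *
            Matrix.fromRows N1 N2 =
        (1 : Matrix (Fin n) (Fin n) ℝ) -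
          Matrix.fromCols P1 P2 *
            (Matrix.fromRows N1 N2 * Matrix.fromCols P1 P2)⁻¹ *
            Matrix.fromRows N1 N2 := by
  intro ε hε
  set C := Matrix.fromCols P1 P2 with hC
  set N := Matrix.fromRows N1 N2 with hN
  set D : Matrix (Fin r ⊕ Fin s) (Fin r ⊕ Fin s) ℝ :=
    Matrix.fromBlocks 1 0 0 (ε • 1) with hD
  set E : Matrix (Fin r ⊕ Fin s) (Fin r ⊕ Fin s) ℝ :=
    Matrix.fromBlocks 1 0 0 (ε⁻¹ • 1) with hE
  have hDE : D * E = 1 := by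
    rw [hD, hE, Matrix.fromBlocks_multiply]
    simp [smul_smul, inv_mul_cancel₀ hε, one_smul, ← Matrix.fromBlocks_one]
  have hDu : IsUnit D := (Matrix.isUnit_iff_isUnit_det D).mpr (Matrix.isUnit_det_of_right_inverse hDE)
  have hCD : C * D = Matrix.fromCols P1 (ε • P2) := by
    rw [hC, hD, Matrix.fromCols_mul_fromBlocks]
    simp [Matrix.mul_smul]
  have key : N * Matrix.fromCols P1 (ε • P2) = (N * C) * D := by
    rw [← hCD, Matrix.mul_assoc]
  constructor
  · rw [key]; exact hB.mul hDu
  · rw [key, ← hCD, Matrix.mul_inv_rev, Matrix.mul_assoc C D,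
      ← Matrix.mul_assoc D, Matrix.mul_nonsing_inv _
        ((Matrix.isUnit_iff_isUnit_det D).mp hDu), Matrix.one_mul]
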